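/- Consider the RSSD iteration on the unit sphere S^{n−1} (n ≥ 1) applied to a smoothing function f̃ of f : ℝⁿ → ℝ, and let K = {ℓ : ‖η_ℓ‖ ≤ δ_ℓ}. Suppose in addition that f̃ satisfies Riemannian gradient sub-consistency on the sphere: for every x ∈ S^{n−1}, every v ∈ ℝⁿ which is a limit of Proj_{z_k}(∇_x f̃(z_k, μ_k)) along some sequences z_k ∈ S^{n−1} with z_k → x and μ_k → 0⁺ belongs to the Riemannian limiting subdifferential ∂_R f(x). Then any accumulation point x* of the subsequence (x_ℓ)_{ℓ ∈ K} is a Riemannian limiting stationary point of the problem min_{x ∈ S^{n−1}} f(x), i.e., 0 ∈ ∂_R f(x*). -/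

import Mathlib

open Filter Topology

/-- The orthogonal projection onto the tangent space of the unit sphere at `x`:
`Proj_x(v) = v − ⟨v, x⟩x`. -/
noncomputable def sphereProj {n : ℕ} (x v : EuclideanSpace ℝ (Fin n)) :
    EuclideanSpace ℝ (Fin n) :=
  v - (inner ℝ v x : ℝ) • x

/-- The RSSD search direction `η = −Proj_x(∇_x f̃(x, μ))` at the point `x` with
smoothing parameter `μ`. -/
noncomputable def rssdDir {n : ℕ} (ft : EuclideanSpace ℝ (Fin n) → ℝ → ℝ)
    (x : EuclideanSpace ℝ (Fin n)) (μ : ℝ) : EuclideanSpace ℝ (Fin n) :=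
  -sphereProj x (gradient (fun y => ft y μ) x)

/-- The Armijo condition at `x ∈ S^{n−1}` with parameter `μ`, stepsize `t`, slope
parameter `σ` and direction `η`, along the retraction `R_x(ξ) = (x+ξ)/‖x+ξ‖`:
`f̃((x + tη)/‖x + tη‖, μ) ≤ f̃(x, μ) − σ t ‖η‖²`. -/
def ArmijoCond {n : ℕ} (ft : EuclideanSpace ℝ (Fin n) → ℝ → ℝ)
    (x : EuclideanSpace ℝ (Fin n)) (μ σ t : ℝ) (η : EuclideanSpace ℝ (Fin n)) : Prop :=
  ft ((‖x + t • η‖)⁻¹ • (x + t • η)) μ ≤ ft x μ - σ * t * ‖η‖ ^ 2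

/-- The RSSD iteration on the unit sphere `S^{n−1}`: parameters
`θ_μ, θ_δ, β, σ ∈ (0,1)`, `ᾱ > 0`; initial data `x 0 ∈ S^{n−1}`, `μ 0 > 0`, `δ 0 > 0`;
`η_ℓ = −Proj_{x_ℓ}(∇_x f̃(x_ℓ, μ_ℓ))`; if `‖η_ℓ‖ ≤ δ_ℓ` then `μ_{ℓ+1} = θ_μ μ_ℓ`,
`δ_{ℓ+1} = θ_δ δ_ℓ`, `x_{ℓ+1} = x_ℓ`; otherwise `μ_{ℓ+1} = μ_ℓ`, `δ_{ℓ+1} = δ_ℓ`, and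
`x_{ℓ+1} = R_{x_ℓ}(β^{m_ℓ} ᾱ η_ℓ)` where `m_ℓ` is the smallest nonnegative integer
satisfying the Armijo condition. -/
structure IsRSSDIteration {n : ℕ} (ft : EuclideanSpace ℝ (Fin n) → ℝ → ℝ)
    (θμ θδ β σ abar : ℝ) (x : ℕ → EuclideanSpace ℝ (Fin n)) (μ δ : ℕ → ℝ) : Prop where
  smooth : ∀ m > (0 : ℝ), ContDiff ℝ 1 (fun y => ft y m)
  hθμ : 0 < θμ ∧ θμ < 1
  hθδ : 0 < θδ ∧ θδ < 1
  hβ : 0 < β ∧ β < 1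
  hσ : 0 < σ ∧ σ < 1
  habar : 0 < abar
  hμ0 : 0 < μ 0
  hδ0 : 0 < δ 0
  sphere : ∀ ℓ, ‖x ℓ‖ = 1
  step_small : ∀ ℓ, ‖rssdDir ft (x ℓ) (μ ℓ)‖ ≤ δ ℓ →
    μ (ℓ + 1) = θμ * μ ℓ ∧ δ (ℓ + 1) = θδ * δ ℓ ∧ x (ℓ + 1) = x ℓ
  step_big : ∀ ℓ, ¬ ‖rssdDir ft (x ℓ) (μ ℓ)‖ ≤ δ ℓ →
    μ (ℓ + 1) = μ ℓ ∧ δ (ℓ + 1) = δ ℓ ∧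
    ∃ m : ℕ,
      ArmijoCond ft (x ℓ) (μ ℓ) σ (β ^ m * abar) (rssdDir ft (x ℓ) (μ ℓ)) ∧
      (∀ j : ℕ, j < m →
        ¬ ArmijoCond ft (x ℓ) (μ ℓ) σ (β ^ j * abar) (rssdDir ft (x ℓ) (μ ℓ))) ∧
      x (ℓ + 1) = (‖x ℓ + (β ^ m * abar) • rssdDir ft (x ℓ) (μ ℓ)‖)⁻¹ •
        (x ℓ + (β ^ m * abar) • rssdDir ft (x ℓ) (μ ℓ))


/-- `ft` is a smoothing function of `f : ℝⁿ → ℝ` with constant `κ > 0` and function `ω`. -/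
def IsSmoothingFun {n : ℕ} (f : EuclideanSpace ℝ (Fin n) → ℝ)
    (ft : EuclideanSpace ℝ (Fin n) → ℝ → ℝ) (κ : ℝ) (ω : ℝ → ℝ) : Prop :=
  0 < κ ∧ (∀ μ > (0 : ℝ), ContDiff ℝ 1 (fun x => ft x μ)) ∧
    (∀ μ > (0 : ℝ), 0 < ω μ) ∧ Filter.Tendsto ω (nhdsWithin 0 (Set.Ioi 0)) (nhds 0) ∧
    ∀ x, ∀ μ > (0 : ℝ), |ft x μ - f x| ≤ κ * ω μ

/-- `v` is a Riemannian Fréchet subgradient of `f` at `x ∈ S^{n−1}`: there exist `δ > 0`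
and `h` continuously differentiable on the open ball of radius `δ` centered at `x` such
that `f − h` attains a local minimum at `x` relative to the sphere and
`v = Proj_x(∇h(x))`. -/
def IsRFrechetSubgradient {n : ℕ} (f : EuclideanSpace ℝ (Fin n) → ℝ)
    (x v : EuclideanSpace ℝ (Fin n)) : Prop :=
  ∃ δ > (0 : ℝ), ∃ h : EuclideanSpace ℝ (Fin n) → ℝ,
    ContDiffOn ℝ 1 h (Metric.ball x δ) ∧
    (∃ ε > (0 : ℝ), ∀ y, ‖y‖ = 1 → ‖y - x‖ < ε → f x - h x ≤ f y - h y) ∧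
    v = sphereProj x (gradient h x)

/-- `v ∈ ∂_R f(x)`: `v` is a Riemannian limiting subgradient of `f` at `x ∈ S^{n−1}`. -/
def IsRLimitingSubgradient {n : ℕ} (f : EuclideanSpace ℝ (Fin n) → ℝ)
    (x v : EuclideanSpace ℝ (Fin n)) : Prop :=
  ∃ (xk vk : ℕ → EuclideanSpace ℝ (Fin n)),
    (∀ k, ‖xk k‖ = 1) ∧
    Filter.Tendsto xk Filter.atTop (nhds x) ∧
    Filter.Tendsto (fun k => f (xk k)) Filter.atTop (nhds (f x)) ∧
    (∀ k, IsRFrechetSubgradient f (xk k) (vk k)) ∧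
    Filter.Tendsto vk Filter.atTop (nhds v)

/-- If the smoothing function `f̃` of `f` satisfies Riemannian gradient sub-consistency
on the sphere, then any accumulation point `x*` of the subsequence `(x_ℓ)_{ℓ ∈ K}` of
the RSSD iterates, where `K = {ℓ : ‖η_ℓ‖ ≤ δ_ℓ}`, is a Riemannian limiting stationary
point of `min_{x ∈ S^{n−1}} f(x)`: `0 ∈ ∂_R f(x*)`. -/
theorem rssd_accumulation_point_is_limiting_stationary (n : ℕ) (hn : 1 ≤ n)
    (f : EuclideanSpace ℝ (Fin n) → ℝ) (ft : EuclideanSpace ℝ (Fin n) → ℝ → ℝ)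
    (κ : ℝ) (ω : ℝ → ℝ) (hsm : IsSmoothingFun f ft κ ω)
    (hsub : ∀ (x v : EuclideanSpace ℝ (Fin n)), ‖x‖ = 1 →
      (∃ (z : ℕ → EuclideanSpace ℝ (Fin n)) (ν : ℕ → ℝ),
        (∀ k, ‖z k‖ = 1) ∧ Filter.Tendsto z Filter.atTop (nhds x) ∧ (∀ k, 0 < ν k) ∧
        Filter.Tendsto ν Filter.atTop (nhds 0) ∧
        Filter.Tendsto (fun k => sphereProj (z k) (gradient (fun y => ft y (ν k)) (z k)))
          Filter.atTop (nhds v)) →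
      IsRLimitingSubgradient f x v)
    (θμ θδ β σ abar : ℝ) (x : ℕ → EuclideanSpace ℝ (Fin n)) (μ δ : ℕ → ℝ)
    (hiter : IsRSSDIteration ft θμ θδ β σ abar x μ δ)
    (xs : EuclideanSpace ℝ (Fin n)) (φ : ℕ → ℕ) (hφ : StrictMono φ)
    (hφK : ∀ k, ‖rssdDir ft (x (φ k)) (μ (φ k))‖ ≤ δ (φ k))
    (hacc : Filter.Tendsto (fun k => x (φ k)) Filter.atTop (nhds xs)) :
    IsRLimitingSubgradient f xs 0 := by

  -- μ and δ are positive along the iteration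
  have hμpos : ∀ ℓ, 0 < μ ℓ := by
    intro ℓ
    induction ℓ with
    | zero => exact hiter.hμ0
    | succ m ih =>
      by_cases h : ‖rssdDir ft (x m) (μ m)‖ ≤ δ m
      · rw [(hiter.step_small m h).1]; exact mul_pos hiter.hθμ.1 ih
      · rw [(hiter.step_big m h).1]; exact ih
  have hδpos : ∀ ℓ, 0 < δ ℓ := by
    intro ℓ
    induction ℓ with
    | zero => exact hiter.hδ0
    | succ m ih =>
      by_cases h : ‖rssdDir ft (x m) (μ m)‖ ≤ δ m
      · rw [(hiter.step_small m h).2.1]; exact mul_pos hiter.hθδ.1 ih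
      · rw [(hiter.step_big m h).2.1]; exact ih
  -- μ and δ are antitone
  have hμanti : Antitone μ := by
    apply antitone_nat_of_succ_le
    intro m
    by_cases h : ‖rssdDir ft (x m) (μ m)‖ ≤ δ m
    · rw [(hiter.step_small m h).1]
      nlinarith [hμpos m, hiter.hθμ.1, hiter.hθμ.2]
    · rw [(hiter.step_big m h).1]
  have hδanti : Antitone δ := by
    apply antitone_nat_of_succ_le
    intro m
    by_cases h : ‖rssdDir ft (x m) (μ m)‖ ≤ δ m
    · rw [(hiter.step_small m h).2.1]
      nlinarith [hδpos m, hiter.hθδ.1, hiter.hθδ.2]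
    · rw [(hiter.step_big m h).2.1]
  -- geometric decay along φ
  have hμbound : ∀ k, μ (φ k) ≤ θμ ^ k * μ 0 := by
    intro k
    induction k with
    | zero => simpa using hμanti (Nat.zero_le (φ 0))
    | succ m ih =>
      have h1 : μ (φ (m + 1)) ≤ μ (φ m + 1) := hμanti (Nat.succ_le_of_lt (hφ (Nat.lt_succ_self m)))
      have h2 : μ (φ m + 1) = θμ * μ (φ m) := (hiter.step_small (φ m) (hφK m)).1
      calc μ (φ (m + 1)) ≤ θμ * μ (φ m) := by rw [← h2]; exact h1
        _ ≤ θμ * (θμ ^ m * μ 0) := by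
            exact mul_le_mul_of_nonneg_left ih hiter.hθμ.1.le
        _ = θμ ^ (m + 1) * μ 0 := by ring
  have hδbound : ∀ k, δ (φ k) ≤ θδ ^ k * δ 0 := by
    intro k
    induction k with
    | zero => simpa using hδanti (Nat.zero_le (φ 0))
    | succ m ih =>
      have h1 : δ (φ (m + 1)) ≤ δ (φ m + 1) := hδanti (Nat.succ_le_of_lt (hφ (Nat.lt_succ_self m)))
      have h2 : δ (φ m + 1) = θδ * δ (φ m) := (hiter.step_small (φ m) (hφK m)).2.1
      calc δ (φ (m + 1)) ≤ θδ * δ (φ m) := by rw [← h2]; exact h1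
        _ ≤ θδ * (θδ ^ m * δ 0) := mul_le_mul_of_nonneg_left ih hiter.hθδ.1.le
        _ = θδ ^ (m + 1) * δ 0 := by ring
  have hμ0' : Tendsto (fun k => μ (φ k)) atTop (nhds 0) := by
    have hg : Tendsto (fun k => θμ ^ k * μ 0) atTop (nhds 0) := by
      have := (tendsto_pow_atTop_nhds_zero_of_lt_one hiter.hθμ.1.le hiter.hθμ.2).mul_const (μ 0)
      simpa using this
    exact squeeze_zero (fun k => (hμpos (φ k)).le) hμbound hg
  have hδ0' : Tendsto (fun k => δ (φ k)) atTop (nhds 0) := by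
    have hg : Tendsto (fun k => θδ ^ k * δ 0) atTop (nhds 0) := by
      have := (tendsto_pow_atTop_nhds_zero_of_lt_one hiter.hθδ.1.le hiter.hθδ.2).mul_const (δ 0)
      simpa using this
    exact squeeze_zero (fun k => (hδpos (φ k)).le) hδbound hg
  -- xs is on the sphere
  have hxs : ‖xs‖ = 1 := by
    have h1 : Tendsto (fun k => ‖x (φ k)‖) atTop (nhds ‖xs‖) :=
      (continuous_norm.tendsto xs).comp hacc
    have h2 : Tendsto (fun k => ‖x (φ k)‖) atTop (nhds 1) := by
      simp [hiter.sphere]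
    exact tendsto_nhds_unique h1 h2
  -- apply the sub-consistency hypothesis
  apply hsub xs 0 hxs
  refine ⟨fun k => x (φ k), fun k => μ (φ k), fun k => hiter.sphere (φ k), hacc,
    fun k => hμpos (φ k), hμ0', ?_⟩
  have key : ∀ k, ‖sphereProj (x (φ k)) (gradient (fun y => ft y (μ (φ k))) (x (φ k)))‖
      ≤ δ (φ k) := by
    intro k
    have := hφK k
    simpa [rssdDir] using this
  exact squeeze_zero_norm key hδ0'
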